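/- Let b ≥ 2 and let (Z_m), (Z'_m) be real sequences with Z_m → Z > 0, and suppose for constants C, ε that |Z - Z_m - (1/(b-1))(Z_m - Z_{m-1})| ≤ C·b^{-2m+ε} and |Z' - Z'_m - (1/(b-1))(Z'_m - Z'_{m-1})| ≤ C·b^{-2m+ε} for all m, and also (Z'_m) is bounded. Then there exists C' > 0 such that for all sufficiently large m, |Z'/Z - Z'_m/Z_m - (1/(b·Z_m - Z_{m-1}))·((Z_{m-1}Z'_m - Z_m Z'_{m-1})/Z_m)| ≤ C'·b^{-2m+ε}. -/

import Mathlib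

open Filter Topology

lemma key_id (b Z Z' x y x' y' : ℝ) (hb : b - 1 ≠ 0) (hZ : Z ≠ 0) (hx : x ≠ 0)
    (hD : b * x - y ≠ 0) :
    Z' / Z - x' / x - (1 / (b * x - y)) * ((y * x' - x * y') / x) =
      (Z' - x' - (1/(b-1)) * (x' - y')) / Z
      - ((y * x' - x * y') / ((b * x - y) * x)) * ((Z - x - (1/(b-1)) * (x - y)) / Z)
      - x' * (Z - x - (1/(b-1)) * (x - y)) / (Z * x) := by
  have hD' : x * b - y ≠ 0 := by rwa [mul_comm]
  field_simp
  ring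

set_option maxHeartbeats 1000000 in
theorem stmt_14 (b : ℝ) (hb : 2 ≤ b) (Z Z' : ℝ) (hZ : 0 < Z)
    (Zs Zs' : ℕ → ℝ) (hZs : Tendsto Zs atTop (𝓝 Z))
    (hZs' : Tendsto Zs' atTop (𝓝 Z'))
    (C ε : ℝ)
    (h1 : ∀ m : ℕ, |Z - Zs m - (1 / (b - 1)) * (Zs m - Zs (m - 1))| ≤
      C * b ^ (-(2 : ℝ) * m + ε))
    (h2 : ∀ m : ℕ, |Z' - Zs' m - (1 / (b - 1)) * (Zs' m - Zs' (m - 1))| ≤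
      C * b ^ (-(2 : ℝ) * m + ε))
    (hbd : ∃ M, ∀ m, |Zs' m| ≤ M) :
    ∃ C' > (0 : ℝ), ∀ᶠ m in atTop,
      |Z' / Z - Zs' m / Zs m -
          (1 / (b * Zs m - Zs (m - 1))) *
            ((Zs (m - 1) * Zs' m - Zs m * Zs' (m - 1)) / Zs m)| ≤
        C' * b ^ (-(2 : ℝ) * m + ε) := by
  obtain ⟨M, hM⟩ := hbd
  have hM0 : 0 ≤ M := (abs_nonneg _).trans (hM 0)
  have hb1 : (1:ℝ) < b := by linarith
  have hb0 : (0:ℝ) < b := by linarith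
  have hbne : b - 1 ≠ 0 := by linarith
  have hZne : Z ≠ 0 := ne_of_gt hZ
  have hC0 : 0 ≤ C := by
    have h := (abs_nonneg _).trans (h1 0)
    have hp : (0:ℝ) < b ^ (-(2 : ℝ) * (0:ℕ) + ε) := Real.rpow_pos_of_pos hb0 _
    nlinarith
  -- δ for convergence
  set δ : ℝ := (b - 1) * Z / (2 * (b + 1)) with hδdef
  have hδ : 0 < δ := div_pos (by nlinarith) (by linarith)
  have hδZ : δ ≤ Z / 2 := by
    rw [hδdef, div_le_div_iff₀ (by positivity) (by norm_num)]
    nlinarith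
  obtain ⟨N₀, hN₀⟩ := Metric.tendsto_atTop.mp hZs δ hδ
  have hCnn : 0 ≤ C * (1/Z + 14*M/Z^2) := mul_nonneg hC0 (by positivity)
  refine ⟨C * (1/Z + 14*M/Z^2) + 1, by linarith, ?_⟩
  filter_upwards [eventually_ge_atTop (N₀ + 1)] with m hm
  have hm1 : N₀ ≤ m - 1 := Nat.le_sub_one_of_lt hm
  have hmm : N₀ ≤ m := le_of_lt hm
  have hd1 : |Zs m - Z| < δ := by
    have := hN₀ m hmm; rwa [Real.dist_eq] at this
  have hd2 : |Zs (m-1) - Z| < δ := by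
    have := hN₀ (m-1) hm1; rwa [Real.dist_eq] at this
  rw [abs_lt] at hd1 hd2
  have hx1 : Z / 2 ≤ Zs m := by linarith [hd1.1]
  have hx2 : Zs m ≤ 3 * Z / 2 := by linarith [hd1.2]
  have hy1 : Z / 2 ≤ Zs (m-1) := by linarith [hd2.1]
  have hy2 : Zs (m-1) ≤ 3 * Z / 2 := by linarith [hd2.2]
  have hxpos : 0 < Zs m := lt_of_lt_of_le (by positivity) hx1
  have hDpos : Z / 2 ≤ b * Zs m - Zs (m-1) := by
    have h1' : -(δ) < Zs m - Z := hd1.1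
    have h2' : Zs (m-1) - Z < δ := hd2.2
    have : b * Zs m - Zs (m-1) - (b-1)*Z = b * (Zs m - Z) - (Zs (m-1) - Z) := by ring
    have hbd' : b * (Zs m - Z) > -(b * δ) := by nlinarith
    have : b * Zs m - Zs (m-1) > (b-1)*Z - (b+1)*δ := by nlinarith
    have hδeq : (b+1) * δ = (b-1)*Z/2 := by
      rw [hδdef]; field_simp
    nlinarith
  have hDpos' : 0 < b * Zs m - Zs (m-1) := lt_of_lt_of_le (by positivity) hDpos
  set a := Z - Zs m - (1 / (b - 1)) * (Zs m - Zs (m - 1)) with ha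
  set β := Z' - Zs' m - (1 / (b - 1)) * (Zs' m - Zs' (m - 1)) with hβ
  set P := C * b ^ (-(2 : ℝ) * m + ε) with hP
  have haP : |a| ≤ P := h1 m
  have hβP : |β| ≤ P := h2 m
  have hP0 : 0 ≤ P := (abs_nonneg _).trans haP
  set N := Zs (m-1) * Zs' m - Zs m * Zs' (m-1) with hN
  have hNbd : |N| ≤ 3 * Z * M := by
    calc |N| ≤ |Zs (m-1)| * |Zs' m| + |Zs m| * |Zs' (m-1)| := by
          rw [hN]; refine (abs_sub _ _).trans ?_; rw [abs_mul, abs_mul]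
      _ ≤ (3*Z/2) * M + (3*Z/2) * M := by
          have e1 : |Zs (m-1)| ≤ 3*Z/2 := by
            rw [abs_of_pos (lt_of_lt_of_le (by positivity) hy1)]; exact hy2
          have e2 : |Zs m| ≤ 3*Z/2 := by rw [abs_of_pos hxpos]; exact hx2
          exact add_le_add (mul_le_mul e1 (hM m) (abs_nonneg _) (by positivity))
            (mul_le_mul e2 (hM (m-1)) (abs_nonneg _) (by positivity))
      _ = 3 * Z * M := by ring
  -- rewrite using identity
  rw [key_id b Z Z' (Zs m) (Zs (m-1)) (Zs' m) (Zs' (m-1)) hbne hZne (ne_of_gt hxpos) (ne_of_gt hDpos')]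
  have htri : |β / Z - (N / ((b * Zs m - Zs (m-1)) * Zs m)) * (a / Z) - Zs' m * a / (Z * Zs m)|
      ≤ |β| / Z + |N| * |a| / (((b * Zs m - Zs (m-1)) * Zs m) * Z) + M * |a| / (Z * Zs m) := by
    refine (abs_sub _ _).trans ?_
    have t1 : |β / Z - (N / ((b * Zs m - Zs (m-1)) * Zs m)) * (a / Z)| ≤
        |β| / Z + |N| * |a| / (((b * Zs m - Zs (m-1)) * Zs m) * Z) := by
      refine (abs_sub _ _).trans ?_
      gcongr
      · rw [abs_div, abs_of_pos hZ]
      · rw [abs_mul, abs_div, abs_div, abs_of_pos hZ,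
          abs_of_pos (mul_pos hDpos' hxpos)]
        rw [div_mul_div_comm]
    have t2 : |Zs' m * a / (Z * Zs m)| ≤ M * |a| / (Z * Zs m) := by
      rw [abs_div, abs_mul, abs_of_pos (mul_pos hZ hxpos)]
      gcongr
      exact hM m
    linarith
  refine htri.trans ?_
  -- now bound each term
  have hDx : Z^2/4 ≤ (b * Zs m - Zs (m-1)) * Zs m := by
    calc Z^2/4 = (Z/2) * (Z/2) := by ring
      _ ≤ (b * Zs m - Zs (m-1)) * Zs m :=
          mul_le_mul hDpos hx1 (by positivity) hDpos'.le
  have b1 : |β| / Z ≤ P / Z := by gcongr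
  have b2 : |N| * |a| / (((b * Zs m - Zs (m-1)) * Zs m) * Z) ≤ (3*Z*M) * P / ((Z^2/4) * Z) := by
    apply div_le_div₀ (by positivity)
      (mul_le_mul hNbd haP (abs_nonneg _) (by positivity)) (by positivity)
      (mul_le_mul_of_nonneg_right hDx hZ.le)
  have b3 : M * |a| / (Z * Zs m) ≤ M * P / (Z * (Z/2)) :=
    div_le_div₀ (by positivity) (mul_le_mul_of_nonneg_left haP hM0)
      (by positivity) (mul_le_mul_of_nonneg_left hx1 hZ.le)
  have hfinal : P / Z + (3*Z*M) * P / ((Z^2/4) * Z) + M * P / (Z * (Z/2))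
      = (C * (1/Z + 14*M/Z^2)) * b ^ (-(2 : ℝ) * m + ε) := by
    rw [hP]; field_simp; ring
  have hpow : 0 < b ^ (-(2 : ℝ) * m + ε) := Real.rpow_pos_of_pos hb0 _
  nlinarith [b1, b2, b3, hfinal, hpow]
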